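/- Let M_1, ..., M_k ∈ M_{n×m}(ℂ) be matrices whose real and imaginary parts form 2k ℝ-linearly independent real matrices. Then there exists a fluctuation f with real coefficients and real orthogonal matrices u_j ∈ O(n), v_j ∈ O(m) such that M_1^f = Σ_j r_j u_j M_1 v_j ≠ 0 and M_i^f = 0 for all i ≠ 1. -/

import Mathlib

open Matrix

noncomputable section RealFluctAux

/-- Permutation matrices are orthogonal. -/
lemma perm_mem_orth (n : ℕ) (σ : Equiv.Perm (Fin n)) :
    (σ.toPEquiv.toMatrix : Matrix (Fin n) (Fin n) ℝ) ∈ Matrix.orthogonalGroup (Fin n) ℝ := by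
  rw [Matrix.mem_orthogonalGroup_iff]
  have h1 : (star (σ.toPEquiv.toMatrix : Matrix (Fin n) (Fin n) ℝ))
      = (σ.symm.toPEquiv.toMatrix : Matrix (Fin n) (Fin n) ℝ) := by
    rw [Matrix.star_eq_conjTranspose, Equiv.toPEquiv_symm, PEquiv.toMatrix_symm]
    ext p q
    simp [Matrix.conjTranspose_apply]
  rw [← Matrix.conjTranspose_eq_transpose_of_trivial, ← Matrix.star_eq_conjTranspose]
  rw [h1, ← PEquiv.toMatrix_trans, ← Equiv.toPEquiv_trans]
  simp

lemma diag_sign_mem_orth (n : ℕ) (j : Fin n) :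
    (Matrix.diagonal (fun l => if l = j then (-1 : ℝ) else 1)) ∈
      Matrix.orthogonalGroup (Fin n) ℝ := by
  rw [Matrix.mem_orthogonalGroup_iff, ← Matrix.conjTranspose_eq_transpose_of_trivial, Matrix.diagonal_conjTranspose]
  rw [show (star fun l => if l = j then (-1:ℝ) else 1) = (fun l => if l = j then (-1:ℝ) else 1)
    from funext fun l => by by_cases h : l = j <;> simp [h, Pi.star_apply]]
  rw [Matrix.diagonal_mul_diagonal]
  ext p q
  by_cases h : p = q
  · subst h; by_cases h2 : p = j <;> simp [Matrix.diagonal, Matrix.one_apply, h2]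
  · simp [Matrix.diagonal, Matrix.one_apply, h]

/-- The orthogonal group spans all real matrices. -/
lemma span_orth_eq_top (n : ℕ) :
    Submodule.span ℝ ((Matrix.orthogonalGroup (Fin n) ℝ : Set (Matrix (Fin n) (Fin n) ℝ))) = ⊤ := by
  rw [eq_top_iff]
  intro A _
  rw [matrix_eq_sum_single A]
  apply Submodule.sum_mem; intro i _
  apply Submodule.sum_mem; intro j _
  have h0 : Matrix.single i j (A i j) = (A i j) • Matrix.single i j (1:ℝ) := by
    rw [Matrix.smul_single]; norm_num
  rw [h0]
  apply Submodule.smul_mem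
  set σ : Equiv.Perm (Fin n) := Equiv.swap i j with hσ
  set P : Matrix (Fin n) (Fin n) ℝ := σ.toPEquiv.toMatrix with hP
  set D : Matrix (Fin n) (Fin n) ℝ := Matrix.diagonal (fun l => if l = j then (-1:ℝ) else 1) with hD
  have key : Matrix.single i j (1:ℝ) = (1/2 : ℝ) • P + (-(1/2) : ℝ) • (P * D) := by
    ext p q
    rw [Matrix.add_apply, Matrix.smul_apply, Matrix.smul_apply, hD, Matrix.mul_diagonal]
    rw [hP, PEquiv.toMatrix_toPEquiv_eq]
    simp only [Matrix.single, Matrix.of_apply, Matrix.submatrix_apply, id, Matrix.one_apply]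
    by_cases h2 : σ p = q <;> by_cases hq : q = j
    · have hp : p = i := σ.injective (by rw [h2, hq, hσ, Equiv.swap_apply_left])
      simp only [hp, hq, hσ, Equiv.swap_apply_left, if_true, and_self]
      norm_num
    · have hpi : ¬(p = i ∧ q = j) := fun h => hq h.2
      simp only [hpi, h2, hq, if_true, if_false, if_neg, not_false_iff]
      norm_num
      exact fun h h' => hpi ⟨h.symm, h'.symm⟩
    · have hpi : ¬(p = i ∧ q = j) := fun h => h2 (by rw [h.1, hσ, Equiv.swap_apply_left, ← h.2])
      simp only [hpi, h2, if_false, if_neg, not_false_iff]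
      norm_num
      exact fun h h' => hpi ⟨h.symm, h'.symm⟩
    · have hpi : ¬(p = i ∧ q = j) := fun h => hq h.2
      simp only [hpi, h2, if_false, if_neg, not_false_iff]
      norm_num
      exact fun h h' => hpi ⟨h.symm, h'.symm⟩
  rw [key]
  apply Submodule.add_mem
  · exact Submodule.smul_mem _ _ (Submodule.subset_span (perm_mem_orth n σ))
  · exact Submodule.smul_mem _ _ (Submodule.subset_span
      (mul_mem (perm_mem_orth n σ) (diag_sign_mem_orth n j)))

end RealFluctAux

open Matrix in
/-- The linear map `X ↦ A * X * B`. -/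
noncomputable def sandwich (n m : ℕ) (A : Matrix (Fin n) (Fin n) ℝ)
    (B : Matrix (Fin m) (Fin m) ℝ) :
    Matrix (Fin n) (Fin m) ℝ →ₗ[ℝ] Matrix (Fin n) (Fin m) ℝ where
  toFun X := A * X * B
  map_add' X Y := by simp only [Matrix.mul_add, Matrix.add_mul]
  map_smul' r X := by simp only [Matrix.mul_smul, Matrix.smul_mul, RingHom.id_apply]

@[simp] lemma sandwich_apply (n m : ℕ) (A : Matrix (Fin n) (Fin n) ℝ)
    (B : Matrix (Fin m) (Fin m) ℝ) (X : Matrix (Fin n) (Fin m) ℝ) :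
    sandwich n m A B X = A * X * B := rfl

/-- The span of sandwiches by orthogonal matrices. -/
noncomputable def sandwichSpan (n m : ℕ) :
    Submodule ℝ (Matrix (Fin n) (Fin m) ℝ →ₗ[ℝ] Matrix (Fin n) (Fin m) ℝ) :=
  Submodule.span ℝ (Set.range (fun p : Matrix.orthogonalGroup (Fin n) ℝ ×
      Matrix.orthogonalGroup (Fin m) ℝ => sandwich n m (p.1 : Matrix (Fin n) (Fin n) ℝ)
      (p.2 : Matrix (Fin m) (Fin m) ℝ)))

lemma sandwich_mem_span (n m : ℕ) (A : Matrix (Fin n) (Fin n) ℝ)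
    (B : Matrix (Fin m) (Fin m) ℝ) : sandwich n m A B ∈ sandwichSpan n m := by
  -- first: for B orthogonal, all A
  have step1 : ∀ (B₀ : Matrix.orthogonalGroup (Fin m) ℝ) (A : Matrix (Fin n) (Fin n) ℝ),
      sandwich n m A (B₀ : Matrix (Fin m) (Fin m) ℝ) ∈ sandwichSpan n m := by
    intro B₀ A
    have hA : A ∈ Submodule.span ℝ
        ((Matrix.orthogonalGroup (Fin n) ℝ : Set (Matrix (Fin n) (Fin n) ℝ))) := by
      rw [span_orth_eq_top]; trivial
    induction hA using Submodule.span_induction with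
    | mem x hx => exact Submodule.subset_span ⟨(⟨x, hx⟩, B₀), rfl⟩
    | zero =>
        have : sandwich n m (0 : Matrix (Fin n) (Fin n) ℝ) (B₀ : Matrix (Fin m) (Fin m) ℝ) = 0 := by
          apply LinearMap.ext; intro X; simp
        rw [this]; exact Submodule.zero_mem _
    | add x y _ _ hx hy =>
        have : sandwich n m (x + y) (B₀ : Matrix (Fin m) (Fin m) ℝ)
            = sandwich n m x B₀ + sandwich n m y B₀ := by
          apply LinearMap.ext; intro X; simp [Matrix.add_mul]
        rw [this]; exact Submodule.add_mem _ hx hy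
    | smul r x _ hx =>
        have : sandwich n m (r • x) (B₀ : Matrix (Fin m) (Fin m) ℝ)
            = r • sandwich n m x B₀ := by
          apply LinearMap.ext; intro X; simp [Matrix.smul_mul]
        rw [this]; exact Submodule.smul_mem _ _ hx
  have hB : B ∈ Submodule.span ℝ
      ((Matrix.orthogonalGroup (Fin m) ℝ : Set (Matrix (Fin m) (Fin m) ℝ))) := by
    rw [span_orth_eq_top]; trivial
  induction hB using Submodule.span_induction with
  | mem x hx => exact step1 ⟨x, hx⟩ A
  | zero =>
      have : sandwich n m A (0 : Matrix (Fin m) (Fin m) ℝ) = 0 := by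
        apply LinearMap.ext; intro X; simp
      rw [this]; exact Submodule.zero_mem _
  | add x y _ _ hx hy =>
      have : sandwich n m A (x + y) = sandwich n m A x + sandwich n m A y := by
        apply LinearMap.ext; intro X; simp [Matrix.mul_add]
      rw [this]; exact Submodule.add_mem _ hx hy
  | smul r x _ hx =>
      have : sandwich n m A (r • x) = r • sandwich n m A x := by
        apply LinearMap.ext; intro X; simp [Matrix.mul_smul]
      rw [this]; exact Submodule.smul_mem _ _ hx

lemma sandwich_basis_mul (n m : ℕ) (a c : Fin n) (b d : Fin m) (X : Matrix (Fin n) (Fin m) ℝ) :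
    Matrix.single a c (1:ℝ) * X * Matrix.single d b (1:ℝ)
      = X c d • Matrix.single a b (1:ℝ) := by
  ext p q
  simp only [Matrix.mul_apply, Matrix.single, Matrix.of_apply, Matrix.smul_apply,
    ite_and, mul_ite, ite_mul, zero_mul, mul_zero, one_mul, mul_one, smul_eq_mul,
    Finset.sum_ite_eq, Finset.sum_ite_eq', Finset.mem_univ, if_true]
  split_ifs <;> simp_all

lemma sandwichSpan_eq_top (n m : ℕ) : sandwichSpan n m = ⊤ := by
  rw [eq_top_iff]
  intro f _
  have key : f = ∑ a : Fin n, ∑ b : Fin m, ∑ c : Fin n, ∑ d : Fin m,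
      (f (Matrix.single c d 1)) a b •
        sandwich n m (Matrix.single a c 1) (Matrix.single d b 1) := by
    apply LinearMap.ext; intro X
    have hX : f X = ∑ c : Fin n, ∑ d : Fin m, X c d • f (Matrix.single c d 1) := by
      conv_lhs => rw [matrix_eq_sum_single X]
      rw [map_sum]
      apply Finset.sum_congr rfl; intro c _
      rw [map_sum]
      apply Finset.sum_congr rfl; intro d _
      rw [show Matrix.single c d (X c d) = X c d • Matrix.single c d (1:ℝ) by
        rw [Matrix.smul_single]; norm_num]
      rw [_root_.map_smul]
    simp only [LinearMap.sum_apply, LinearMap.smul_apply, sandwich_apply, sandwich_basis_mul]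
    rw [hX]
    ext p q
    simp only [Matrix.sum_apply, Matrix.smul_apply, Matrix.single, Matrix.of_apply,
      smul_eq_mul, ite_and, mul_ite, ite_mul, zero_mul, mul_zero, one_mul, mul_one,
      Finset.sum_ite_eq, Finset.sum_ite_eq', Finset.mem_univ, if_true]
    symm
    rw [Finset.sum_eq_single p (fun a _ ha => by simp [if_neg ha]) (by simp)]
    rw [Finset.sum_eq_single q (fun b _ hb => by simp [if_neg hb]) (by simp)]
    simp [mul_comm]
  rw [key]
  apply Submodule.sum_mem; intro a _
  apply Submodule.sum_mem; intro b _
  apply Submodule.sum_mem; intro c _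
  apply Submodule.sum_mem; intro d _
  exact Submodule.smul_mem _ _ (sandwich_mem_span n m _ _)

/-- If the real and imaginary parts of `M_1, ..., M_k ∈ M_{n×m}(ℂ)` form `2k`
ℝ-linearly independent real matrices, then there is a simultaneous fluctuation
with real coefficients and real orthogonal matrices killing all but the first one. -/
theorem exists_real_fluctuation_isolating_first (n m k : ℕ) (hk : 0 < k)
    (M : Fin k → Matrix (Fin n) (Fin m) ℂ)
    (hM : LinearIndependent ℝ
      (Sum.elim (fun i : Fin k => (M i).map Complex.re)
                (fun i : Fin k => (M i).map Complex.im))) :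
    ∃ (J : Type) (_ : Fintype J) (r : J → ℝ)
      (u : J → Matrix.orthogonalGroup (Fin n) ℝ)
      (v : J → Matrix.orthogonalGroup (Fin m) ℝ),
      (∑ j, r j • (((u j : Matrix (Fin n) (Fin n) ℝ)).map (Complex.ofReal) * M ⟨0, hk⟩ *
          ((v j : Matrix (Fin m) (Fin m) ℝ)).map (Complex.ofReal))) ≠ 0 ∧
      ∀ i : Fin k, i ≠ ⟨0, hk⟩ →
        (∑ j, r j • (((u j : Matrix (Fin n) (Fin n) ℝ)).map (Complex.ofReal) * M i *
            ((v j : Matrix (Fin m) (Fin m) ℝ)).map (Complex.ofReal))) = 0 := by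
  classical
  set i0 : Fin k := ⟨0, hk⟩ with hi0
  set vv : (Fin k ⊕ Fin k) → Matrix (Fin n) (Fin m) ℝ :=
    Sum.elim (fun i : Fin k => (M i).map Complex.re)
             (fun i : Fin k => (M i).map Complex.im) with hvv
  obtain ⟨Q, hQ⟩ := (Submodule.span ℝ (Set.range vv)).exists_isCompl
  set π := Submodule.linearProjOfIsCompl _ Q hQ with hπ
  set w : (Fin k ⊕ Fin k) → Matrix (Fin n) (Fin m) ℝ :=
    Sum.elim (fun i : Fin k => if i = i0 then (M i0).map Complex.re else 0)
             (fun i : Fin k => if i = i0 then (M i0).map Complex.im else 0) with hw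
  set φ := (Finsupp.linearCombination ℝ w).comp ((hM.repr).comp π) with hφdef
  have hφ : ∀ s, φ (vv s) = w s := by
    intro s
    have hmem : vv s ∈ Submodule.span ℝ (Set.range vv) := Submodule.subset_span ⟨s, rfl⟩
    have h1 : π (vv s) = ⟨vv s, hmem⟩ :=
      Submodule.linearProjOfIsCompl_apply_left hQ ⟨vv s, hmem⟩
    have h2 : hM.repr ⟨vv s, hmem⟩ = Finsupp.single s 1 := hM.repr_eq_single s _ rfl
    simp [hφdef, h1, h2, Finsupp.linearCombination_single]
  have hmem : φ ∈ sandwichSpan n m := by rw [sandwichSpan_eq_top]; trivial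
  rw [sandwichSpan, Finsupp.mem_span_range_iff_exists_finsupp] at hmem
  obtain ⟨c, hc⟩ := hmem
  -- auxiliary computations
  have map_mul' : ∀ {p q r : ℕ} (A : Matrix (Fin p) (Fin q) ℝ) (B : Matrix (Fin q) (Fin r) ℝ),
      (A * B).map Complex.ofReal = A.map Complex.ofReal * B.map Complex.ofReal := by
    intro p q r A B
    ext x y
    simp [Matrix.mul_apply, Matrix.map_apply]
  have hdecomp : ∀ (N : Matrix (Fin n) (Fin m) ℂ),
      N = (N.map Complex.re).map Complex.ofReal
          + Complex.I • (N.map Complex.im).map Complex.ofReal := by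
    intro N; ext p q
    simp [Matrix.map_apply, Matrix.add_apply, Matrix.smul_apply, smul_eq_mul]
    rw [mul_comm]
    exact (Complex.re_add_im _).symm
  have hkey : ∀ (A : Matrix (Fin n) (Fin n) ℝ) (B : Matrix (Fin m) (Fin m) ℝ) (i : Fin k),
      A.map Complex.ofReal * M i * B.map Complex.ofReal
        = (A * (M i).map Complex.re * B).map Complex.ofReal
          + Complex.I • (A * (M i).map Complex.im * B).map Complex.ofReal := by
    intro A B i
    conv_lhs => rw [hdecomp (M i)]
    rw [Matrix.mul_add, Matrix.add_mul, Matrix.mul_smul, Matrix.smul_mul]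
    rw [map_mul', map_mul', map_mul', map_mul']
  have hsand : ∀ X : Matrix (Fin n) (Fin m) ℝ,
      ∑ j ∈ c.support, c j • ((j.1 : Matrix (Fin n) (Fin n) ℝ) * X *
        (j.2 : Matrix (Fin m) (Fin m) ℝ)) = φ X := by
    intro X
    have h := LinearMap.congr_fun hc X
    simp only [Finsupp.sum, LinearMap.coe_sum, Finset.sum_apply, LinearMap.smul_apply,
      sandwich_apply] at h
    exact h
  have hmapsum : ∀ (s : Finset (Matrix.orthogonalGroup (Fin n) ℝ × Matrix.orthogonalGroup (Fin m) ℝ))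
      (F : _ → Matrix (Fin n) (Fin m) ℝ) (co : _ → ℝ),
      (∑ j ∈ s, co j • F j).map Complex.ofReal
        = ∑ j ∈ s, co j • (F j).map Complex.ofReal := by
    intro s F co
    ext p q
    simp [Matrix.map_apply, Matrix.sum_apply, Matrix.smul_apply]
  have main : ∀ i : Fin k,
      (∑ j : {x // x ∈ c.support}, c j.1 •
          (((j.1.1 : Matrix (Fin n) (Fin n) ℝ)).map Complex.ofReal * M i *
           ((j.1.2 : Matrix (Fin m) (Fin m) ℝ)).map Complex.ofReal))
        = (φ ((M i).map Complex.re)).map Complex.ofReal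
          + Complex.I • (φ ((M i).map Complex.im)).map Complex.ofReal := by
    intro i
    rw [Finset.sum_coe_sort c.support (fun j => c j •
      (((j.1 : Matrix (Fin n) (Fin n) ℝ)).map Complex.ofReal * M i *
       ((j.2 : Matrix (Fin m) (Fin m) ℝ)).map Complex.ofReal))]
    have step1 : ∀ j ∈ c.support, c j •
        (((j.1 : Matrix (Fin n) (Fin n) ℝ)).map Complex.ofReal * M i *
         ((j.2 : Matrix (Fin m) (Fin m) ℝ)).map Complex.ofReal)
        = c j • (((j.1 : Matrix (Fin n) (Fin n) ℝ) * (M i).map Complex.re *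
              (j.2 : Matrix (Fin m) (Fin m) ℝ)).map Complex.ofReal)
          + Complex.I • (c j • (((j.1 : Matrix (Fin n) (Fin n) ℝ) * (M i).map Complex.im *
              (j.2 : Matrix (Fin m) (Fin m) ℝ)).map Complex.ofReal)) := by
      intro j _
      rw [hkey, smul_add]
      congr 1
      rw [smul_comm]
    rw [Finset.sum_congr rfl step1, Finset.sum_add_distrib, ← Finset.smul_sum]
    congr 1
    · rw [← hsand ((M i).map Complex.re), hmapsum]
    · congr 1
      rw [← hsand ((M i).map Complex.im), hmapsum]
  refine ⟨{x // x ∈ c.support}, inferInstance, fun j => c j.1, fun j => j.1.1, fun j => j.1.2,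
    ?_, ?_⟩
  · rw [main i0]
    have h1 : φ ((M i0).map Complex.re) = (M i0).map Complex.re := by
      have := hφ (Sum.inl i0)
      simpa [hvv, hw] using this
    have h2 : φ ((M i0).map Complex.im) = (M i0).map Complex.im := by
      have := hφ (Sum.inr i0)
      simpa [hvv, hw] using this
    rw [h1, h2, ← hdecomp (M i0)]
    intro h0
    have := hM.ne_zero (Sum.inl i0)
    apply this
    show vv (Sum.inl i0) = 0
    simp [hvv, h0]
  · intro i hi
    rw [main i]
    have h1 : φ ((M i).map Complex.re) = 0 := by
      have := hφ (Sum.inl i)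
      simpa [hvv, hw, hi] using this
    have h2 : φ ((M i).map Complex.im) = 0 := by
      have := hφ (Sum.inr i)
      simpa [hvv, hw, hi] using this
    rw [h1, h2]
    ext p q
    simp [Matrix.map_apply]
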